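/- Let M_1, …, M_d be independent one-parameter counting processes. The multiparameter process 𝓜(t) := M_1(t_1) + M_2(t_2) + ⋯ + M_d(t_d), t = (t_1,…,t_d) ∈ ℝ_+^d, is a multiparameter GCP with transition rates Λ_1, …, Λ_k if and only if for each i = 1, …, d the process M_i is a generalized counting process (GCP) with positive rates λ_{1i}, …, λ_{ki}. -/

import Mathlib

open scoped BigOperators
open MeasureTheory ProbabilityTheory

/-- The one-dimensional distribution of the multiparameter generalized counting process
with `k` kinds of jumps:
`p(n,t) = Σ_{x ∈ Ω(k,n)} ∏_{j=1}^k ((Λ_j·t)^{x_j}/x_j!) e^{−Λ_j·t}`, where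
`Ω(k,n) = {x ∈ ℕ_0^k : Σ_j j·x_j = n}` (here `j = j.1 + 1` ranges over `1,…,k`). -/
noncomputable def gcpPmf (d k : ℕ) (lam : Fin k → Fin d → ℝ) (n : ℕ) (t : Fin d → ℝ) : ℝ :=
  ∑' x : Fin k → ℕ,
    if (∑ j, (j.1 + 1) * x j) = n then
      ∏ j, ((∑ i, lam j i * t i) ^ (x j) / (Nat.factorial (x j)) *
        Real.exp (-(∑ i, lam j i * t i)))
    else 0

/-- The one-dimensional distribution of the one-parameter GCP with positive rates
`λ_1,…,λ_k`: `Pr(M(s) = n) = Σ_{x ∈ Ω(k,n)} ∏_j ((λ_j s)^{x_j}/x_j!) e^{−λ_j s}`. -/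
noncomputable def gcp1Pmf (k : ℕ) (lamv : Fin k → ℝ) (n : ℕ) (s : ℝ) : ℝ :=
  ∑' x : Fin k → ℕ,
    if (∑ j, (j.1 + 1) * x j) = n then
      ∏ j, ((lamv j * s) ^ (x j) / (Nat.factorial (x j)) * Real.exp (-(lamv j * s)))
    else 0

/-- A one-parameter counting process: `M(0) = 0` and `M(s) ≤ M(s')` for `0 ≤ s ≤ s'`. -/
def IsCounting1 {Ω : Type*} (M : ℝ → Ω → ℕ) : Prop :=
  (∀ ω, M 0 ω = 0) ∧ ∀ s s' : ℝ, 0 ≤ s → s ≤ s' → ∀ ω, M s ω ≤ M s' ω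

/-- Independent increments for a one-parameter process. -/
def HasIndepIncrements1 {Ω : Type*} [MeasurableSpace Ω] (μ : Measure Ω)
    (M : ℝ → Ω → ℕ) : Prop :=
  ∀ (m : ℕ) (ts : Fin (m + 1) → ℝ), ts 0 = 0 → (∀ i : Fin m, ts i.castSucc < ts i.succ) →
    iIndepFun
      (fun (i : Fin m) (ω : Ω) => M (ts i.succ) ω - M (ts i.castSucc) ω) μ

/-- Stationary increments for a one-parameter process. -/
def HasStatIncrements1 {Ω : Type*} [MeasurableSpace Ω] (μ : Measure Ω)
    (M : ℝ → Ω → ℕ) : Prop :=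
  ∀ s s' : ℝ, 0 ≤ s → s ≤ s' →
    μ.map (fun ω => M s' ω - M s ω) = μ.map (M (s' - s))

/-- A generalized counting process (GCP) with positive rates `λ_1,…,λ_k`: a one-parameter
counting process with independent and stationary increments whose one-dimensional
distributions are those of the GCP. -/
def IsGCP {Ω : Type*} [MeasurableSpace Ω] (μ : Measure Ω) (k : ℕ)
    (lamv : Fin k → ℝ) (M : ℝ → Ω → ℕ) : Prop :=
  IsCounting1 M ∧ HasIndepIncrements1 μ M ∧ HasStatIncrements1 μ M ∧
    ∀ s : ℝ, 0 ≤ s → ∀ n : ℕ, μ {ω | M s ω = n} = ENNReal.ofReal (gcp1Pmf k lamv n s)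

/-- A multiparameter counting process. -/
def IsMultiCounting {Ω : Type*} (d : ℕ) (N : (Fin d → ℝ) → Ω → ℕ) : Prop :=
  (∀ ω, N 0 ω = 0) ∧ ∀ s t : Fin d → ℝ, 0 ≤ s → s ≤ t → ∀ ω, N s ω ≤ N t ω

/-- Independent increments for a multiparameter process. -/
def HasIndepIncrements {Ω : Type*} [MeasurableSpace Ω] (μ : Measure Ω) (d : ℕ)
    (N : (Fin d → ℝ) → Ω → ℕ) : Prop :=
  ∀ (m : ℕ) (ts : Fin (m + 1) → Fin d → ℝ), ts 0 = 0 →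
    (∀ i : Fin m, ts i.castSucc < ts i.succ) →
    iIndepFun
      (fun (i : Fin m) (ω : Ω) => N (ts i.succ) ω - N (ts i.castSucc) ω) μ

/-- Stationary increments for a multiparameter process. -/
def HasStatIncrements {Ω : Type*} [MeasurableSpace Ω] (μ : Measure Ω) (d : ℕ)
    (N : (Fin d → ℝ) → Ω → ℕ) : Prop :=
  ∀ s t : Fin d → ℝ, 0 ≤ s → s ≤ t →
    μ.map (fun ω => N t ω - N s ω) = μ.map (N (t - s))

/-- A multiparameter GCP with transition rates `Λ_1,…,Λ_k`. -/
def IsMultiGCP {Ω : Type*} [MeasurableSpace Ω] (μ : Measure Ω) (d k : ℕ)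
    (lam : Fin k → Fin d → ℝ) (M : (Fin d → ℝ) → Ω → ℕ) : Prop :=
  IsMultiCounting d M ∧ HasIndepIncrements μ d M ∧ HasStatIncrements μ d M ∧
    ∀ t : Fin d → ℝ, 0 ≤ t → ∀ n : ℕ,
      μ {ω | M t ω = n} = ENNReal.ofReal (gcpPmf d k lam n t)


namespace GCPAux

open scoped BigOperators ENNReal
open MeasureTheory ProbabilityTheory

/-! ### Elementary `ℝ≥0∞` summation lemmas -/

noncomputable def pois (a : ℝ) (r : ℕ) : ℝ≥0∞ :=
  ENNReal.ofReal (a ^ r / r.factorial * Real.exp (-a))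

lemma prod_ite_zero {ι : Type*} [Fintype ι] (p : ι → Prop) [DecidablePred p] (a : ι → ℝ≥0∞) :
    (∏ i, if p i then a i else 0) = if (∀ i, p i) then ∏ i, a i else 0 := by
  by_cases h : ∀ i, p i
  · rw [if_pos h]; exact Finset.prod_congr rfl fun i _ => if_pos (h i)
  · rw [if_neg h]
    push_neg at h
    obtain ⟨i, hi⟩ := h
    exact Finset.prod_eq_zero (Finset.mem_univ i) (if_neg hi)

lemma tsum_regroup {β γ : Type*} [DecidableEq γ] (g : β → γ) (C : γ → Prop) [DecidablePred C]
    (F : β → ℝ≥0∞) :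
    ∑' b, (if C (g b) then F b else 0)
      = ∑' c, (if C c then ∑' b, (if g b = c then F b else 0) else 0) := by
  have h1 : ∀ c, (if C c then ∑' b, (if g b = c then F b else 0) else 0)
      = ∑' b, (if C c ∧ g b = c then F b else 0) := by
    intro c
    by_cases h : C c
    · rw [if_pos h]; exact tsum_congr fun b => by by_cases h2 : g b = c <;> simp [h, h2]
    · rw [if_neg h]; symm
      simp [h]
  rw [tsum_congr h1, ENNReal.tsum_comm]
  refine tsum_congr fun b => ?_
  rw [tsum_eq_single (g b) (fun c hc => by rw [if_neg (fun h => hc h.2.symm)])]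
  by_cases h : C (g b) <;> simp [h]

lemma prod_tsum {β : Type*} : ∀ (m : ℕ) (f : Fin m → β → ℝ≥0∞),
    (∏ i, ∑' b, f i b) = ∑' g : Fin m → β, ∏ i, f i (g i) := by
  intro m
  induction m with
  | zero =>
    intro f
    haveI : Unique (Fin 0 → β) := ⟨⟨finZeroElim⟩, fun g => funext fun i => i.elim0⟩
    rw [tsum_eq_single default (fun g hg => absurd (Subsingleton.elim g default) hg)]
    simp
  | succ m ih =>
    intro f
    rw [Fin.prod_univ_succ, ih (fun i b => f i.succ b)]
    rw [← ENNReal.tsum_mul_right]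
    have : ∀ b : β, (f 0 b) * ∑' g : Fin m → β, ∏ i, f i.succ (g i)
        = ∑' g : Fin m → β, f 0 b * ∏ i, f i.succ (g i) := fun b =>
      ENNReal.tsum_mul_left.symm
    rw [tsum_congr this, ← ENNReal.tsum_prod]
    rw [← Equiv.tsum_eq (Fin.consEquiv (fun _ : Fin (m+1) => β))
      (fun g => ∏ i, f i (g i))]
    refine tsum_congr fun p => ?_
    rw [Fin.prod_univ_succ]
    simp [Fin.consEquiv]

/-! ### Poisson weights and their convolution -/

lemma pois_zero (r : ℕ) : pois 0 r = if r = 0 then 1 else 0 := by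
  cases r with
  | zero => simp [pois]
  | succ m => simp [pois]

lemma pois_real_nonneg (a : ℝ) (ha : 0 ≤ a) (r : ℕ) :
    0 ≤ a ^ r / r.factorial * Real.exp (-a) :=
  mul_nonneg (div_nonneg (pow_nonneg ha r) (Nat.cast_nonneg _)) (Real.exp_pos _).le

lemma pois_add (a b : ℝ) (ha : 0 ≤ a) (hb : 0 ≤ b) (r : ℕ) :
    ∑' p : ℕ × ℕ, (if p.1 + p.2 = r then pois a p.1 * pois b p.2 else 0)
      = pois (a + b) r := by
  rw [ENNReal.tsum_prod']
  have h1 : ∀ p : ℕ, ∑' q : ℕ, (if p + q = r then pois a p * pois b q else 0)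
      = if p ≤ r then pois a p * pois b (r - p) else 0 := by
    intro p
    rw [tsum_eq_single (r - p) (fun q hq => if_neg (fun h => hq (by omega)))]
    by_cases h : p ≤ r
    · rw [if_pos (by omega), if_pos h]
    · rw [if_neg (by omega), if_neg h]
  rw [tsum_congr h1, tsum_eq_sum (s := Finset.range (r + 1))
    (fun p hp => if_neg (by simp at hp; omega))]
  have h2 : ∀ p ∈ Finset.range (r + 1), (if p ≤ r then pois a p * pois b (r - p) else 0)
      = ENNReal.ofReal ((a ^ p / p.factorial * Real.exp (-a)) *
          (b ^ (r - p) / (r - p).factorial * Real.exp (-b))) := by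
    intro p hp
    rw [if_pos (by simp at hp; omega), pois, pois,
      ← ENNReal.ofReal_mul (pois_real_nonneg a ha p)]
  rw [Finset.sum_congr rfl h2, ← ENNReal.ofReal_sum_of_nonneg (fun p _ =>
    mul_nonneg (pois_real_nonneg a ha p) (pois_real_nonneg b hb _))]
  unfold pois
  congr 1
  have key : ∀ p ∈ Finset.range (r + 1),
      (a ^ p / p.factorial * Real.exp (-a)) * (b ^ (r - p) / (r - p).factorial * Real.exp (-b))
        = (a ^ p * b ^ (r - p) * (r.choose p)) / r.factorial * Real.exp (-(a + b)) := by
    intro p hp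
    have hpr : p ≤ r := by simp at hp; omega
    have hc : ((r.choose p : ℝ)) * p.factorial * (r - p).factorial = r.factorial := by
      exact_mod_cast congrArg (Nat.cast : ℕ → ℝ) (Nat.choose_mul_factorial_mul_factorial hpr)
    have hp0 : (p.factorial : ℝ) ≠ 0 := Nat.cast_ne_zero.2 p.factorial_ne_zero
    have hrp0 : ((r - p).factorial : ℝ) ≠ 0 := Nat.cast_ne_zero.2 (r - p).factorial_ne_zero
    have hr0 : (r.factorial : ℝ) ≠ 0 := Nat.cast_ne_zero.2 r.factorial_ne_zero
    rw [neg_add, Real.exp_add]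
    field_simp
    linear_combination (-(a ^ p * b ^ (r - p))) * hc
  rw [Finset.sum_congr rfl key, ← Finset.sum_mul, ← Finset.sum_div, ← add_pow]

lemma ite_mul_zero {c : Prop} [Decidable c] (x y : ℝ≥0∞) :
    (if c then x * y else 0) = x * (if c then y else 0) := by
  split <;> simp

lemma pois_pi : ∀ (d : ℕ) (a : Fin d → ℝ), (∀ i, 0 ≤ a i) → ∀ r : ℕ,
    (∑' c : Fin d → ℕ, if (∑ i, c i) = r then ∏ i, pois (a i) (c i) else 0)
      = pois (∑ i, a i) r := by
  intro d
  induction d with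
  | zero =>
    intro a ha r
    haveI : Unique (Fin 0 → ℕ) := ⟨⟨finZeroElim⟩, fun g => funext fun i => i.elim0⟩
    rw [tsum_eq_single default (fun g hg => absurd (Subsingleton.elim g default) hg)]
    simp [pois_zero, eq_comm]
  | succ d ih =>
    intro a ha r
    rw [← Equiv.tsum_eq (Fin.consEquiv (fun _ : Fin (d+1) => ℕ))
      (fun c => if (∑ i, c i) = r then ∏ i, pois (a i) (c i) else 0)]
    have hterm : ∀ p : ℕ × (Fin d → ℕ),
        (if (∑ i, (Fin.consEquiv (fun _ : Fin (d+1) => ℕ)) p i) = r then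
          ∏ i, pois (a i) ((Fin.consEquiv (fun _ : Fin (d+1) => ℕ)) p i) else 0)
        = if p.1 + ∑ i, p.2 i = r then
            pois (a 0) p.1 * ∏ i, pois (a i.succ) (p.2 i) else 0 := by
      intro p
      simp [Fin.consEquiv, Fin.sum_univ_succ, Fin.prod_univ_succ]
    rw [tsum_congr hterm, ENNReal.tsum_prod']
    have hinner : ∀ h : ℕ,
        (∑' rest : Fin d → ℕ, if h + ∑ i, rest i = r then
            pois (a 0) h * ∏ i, pois (a i.succ) (rest i) else 0)
        = ∑' q : ℕ, (if h + q = r then pois (a 0) h * pois (∑ i : Fin d, a i.succ) q else 0) := by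
      intro h
      rw [tsum_congr (fun rest => ite_mul_zero (pois (a 0) h) _), ENNReal.tsum_mul_left,
        tsum_regroup (fun rest : Fin d → ℕ => ∑ i, rest i) (fun q => h + q = r)]
      rw [← ENNReal.tsum_mul_left]
      refine tsum_congr fun q => ?_
      rw [ite_mul_zero]
      congr 1
      by_cases hc : h + q = r
      · rw [if_pos hc, if_pos hc, ih (fun i => a i.succ) (fun i => ha i.succ) q]
      · rw [if_neg hc, if_neg hc]
    rw [tsum_congr hinner, Fin.sum_univ_succ,
      ← pois_add (a 0) (∑ i : Fin d, a i.succ) (ha 0)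
        (Finset.sum_nonneg fun i _ => ha i.succ) r, ENNReal.tsum_prod']

end GCPAux

namespace GCPAux

variable {Ω : Type*} [MeasurableSpace Ω] {μ : Measure Ω}

lemma measure_preimage_eq_tsum {E : Type*} [Countable E]
    [MeasurableSpace E] [MeasurableSingletonClass E]
    (g : Ω → E) (hg : Measurable g) (A : Set E) [DecidablePred (· ∈ A)] :
    μ (g ⁻¹' A) = ∑' e : E, (if e ∈ A then μ (g ⁻¹' {e}) else 0) := by
  have hU : g ⁻¹' A = ⋃ e : E, (if e ∈ A then g ⁻¹' {e} else ∅) := by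
    ext ω
    simp only [Set.mem_iUnion, Set.mem_preimage]
    constructor
    · intro h
      refine ⟨g ω, ?_⟩
      rw [if_pos h]
      exact rfl
    · rintro ⟨e, he⟩
      by_cases hA : e ∈ A
      · rw [if_pos hA] at he
        have : g ω = e := he
        rwa [this]
      · rw [if_neg hA] at he
        exact absurd he (Set.notMem_empty ω)
  rw [hU, measure_iUnion ?_ ?_]
  · exact tsum_congr fun e => by split <;> simp
  · intro e e' hee
    dsimp [Function.onFun]
    split <;> split <;> try simp
    exact Set.disjoint_left.2 fun ω h1 h2 => hee ((Eq.symm (h1 : g ω = e)).trans (h2 : g ω = e'))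
  · intro e
    split
    · exact hg (measurableSet_singleton _)
    · exact MeasurableSet.empty

lemma iIndepFun_meas_inter {m : ℕ} {E : Type*} [MeasurableSpace E] [MeasurableSingletonClass E]
    {f : Fin m → Ω → E}
    (h : iIndepFun f μ) (y : Fin m → E) :
    μ (⋂ n, f n ⁻¹' {y n}) = ∏ n, μ (f n ⁻¹' {y n}) := by
  have := h.measure_inter_preimage_eq_mul Finset.univ
    (sets := fun n => {y n}) (fun n _ => measurableSet_singleton _)
  simpa using this

/-- From the product rule on singletons, reconstruct independence (ℕ-valued, finite family). -/
lemma iIndepFun_of_singleton_rule {m : ℕ} [IsProbabilityMeasure μ] {f : Fin m → Ω → ℕ}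
    (hf : ∀ n, Measurable (f n))
    (h : ∀ y : Fin m → ℕ, μ (⋂ n, f n ⁻¹' {y n}) = ∏ n, μ (f n ⁻¹' {y n})) :
    iIndepFun f μ := by
  classical
  -- Step 1: the generalized claim with univ replaced on a subset
  have claim : ∀ (Uc : Finset (Fin m)) (y : Fin m → ℕ),
      μ (⋂ n, if n ∈ Ucᶜ then f n ⁻¹' {y n} else Set.univ)
        = ∏ n ∈ Ucᶜ, μ (f n ⁻¹' {y n}) := by
    intro Uc
    induction Uc using Finset.induction with
    | empty =>
      intro y
      simp only [Finset.compl_empty, Finset.mem_univ, if_true]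
      exact h y
    | @insert j Uc hj ih =>
      intro y
      rw [Finset.compl_insert]
      have hjc : j ∈ Ucᶜ := Finset.mem_compl.2 hj
      have hdec : (⋂ n, if n ∈ Ucᶜ.erase j then f n ⁻¹' {y n} else Set.univ)
          = ⋃ r : ℕ, (⋂ n, if n ∈ Ucᶜ then f n ⁻¹' {Function.update y j r n} else Set.univ) := by
        ext ω
        simp only [Set.mem_iUnion, Set.mem_iInter]
        constructor
        · intro hω
          refine ⟨f j ω, fun n => ?_⟩
          by_cases hn : n ∈ Ucᶜ
          · rw [if_pos hn]
            by_cases hnj : n = j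
            · subst hnj
              simp [Function.update_self]
            · have hmem : n ∈ Ucᶜ.erase j := Finset.mem_erase.2 ⟨hnj, hn⟩
              have h2 := hω n
              rw [if_pos hmem] at h2
              simpa [Function.update_of_ne hnj] using h2
          · rw [if_neg hn]; trivial
        · rintro ⟨r, hr⟩ n
          by_cases hn : n ∈ Ucᶜ.erase j
          · rw [if_pos hn]
            obtain ⟨hnj, hnc⟩ := Finset.mem_erase.1 hn
            have h2 := hr n
            rw [if_pos hnc, Function.update_of_ne hnj] at h2
            exact h2
          · rw [if_neg hn]; trivial
      have hmeas : ∀ (z : Fin m → ℕ),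
          MeasurableSet (⋂ n, if n ∈ Ucᶜ then f n ⁻¹' {z n} else Set.univ) := by
        intro z
        refine MeasurableSet.iInter fun n => ?_
        split
        · exact hf n (measurableSet_singleton _)
        · exact MeasurableSet.univ
      have hdisj : Pairwise (Function.onFun Disjoint
          (fun r : ℕ => ⋂ n, if n ∈ Ucᶜ then f n ⁻¹' {Function.update y j r n} else Set.univ)) := by
        intro r r' hrr
        dsimp [Function.onFun]
        refine Set.disjoint_left.2 fun ω h1 h2 => hrr ?_
        simp only [Set.mem_iInter] at h1 h2
        have e1 := h1 j; have e2 := h2 j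
        rw [if_pos hjc] at e1 e2
        have e1' : f j ω = r := by simpa [Function.update_self] using e1
        have e2' : f j ω = r' := by simpa [Function.update_self] using e2
        rw [← e1', e2']
      rw [hdec, measure_iUnion hdisj (fun r => hmeas _),
        tsum_congr (fun r => ih (Function.update y j r))]
      have hsplit : ∀ r : ℕ, (∏ n ∈ Ucᶜ, μ (f n ⁻¹' {Function.update y j r n}))
          = μ (f j ⁻¹' {r}) * ∏ n ∈ Ucᶜ.erase j, μ (f n ⁻¹' {y n}) := by
        intro r
        rw [← Finset.mul_prod_erase _ _ hjc, Function.update_self]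
        congr 1
        refine Finset.prod_congr rfl fun n hn => ?_
        rw [Function.update_of_ne (Finset.mem_erase.1 hn).1]
      rw [tsum_congr hsplit, ENNReal.tsum_mul_right]
      have htot : (∑' r : ℕ, μ (f j ⁻¹' {r})) = 1 := by
        have hU : (⋃ r : ℕ, f j ⁻¹' {r}) = Set.univ := by
          ext ω; simp
        rw [← measure_iUnion ?_ (fun r => hf j (measurableSet_singleton _)), hU, measure_univ]
        intro r r' hrr
        dsimp [Function.onFun]
        refine Set.disjoint_left.2 fun ω h1 h2 => hrr ?_
        rw [← (h1 : f j ω = r), (h2 : f j ω = r')]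
      rw [htot, one_mul]
  -- Step 2: iIndepSets for the pi-systems of singleton preimages (with univ)
  set π : Fin m → Set (Set Ω) :=
    fun n => insert Set.univ {s | ∃ r : ℕ, s = f n ⁻¹' {r}} with hπ
  have hpi : ∀ n, IsPiSystem (π n) := by
    intro n s hs t ht hst
    rcases hs with rfl | ⟨r, rfl⟩
    · rw [Set.univ_inter]; exact ht
    · rcases ht with rfl | ⟨r', rfl⟩
      · rw [Set.inter_univ]; exact Set.mem_insert_iff.2 (Or.inr ⟨r, rfl⟩)
      · obtain ⟨ω, hω1, hω2⟩ := hst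
        have : r = r' := ((hω1 : f n ω = r).symm).trans (hω2 : f n ω = r')
        subst this
        rw [Set.inter_self]
        exact Set.mem_insert_iff.2 (Or.inr ⟨r, rfl⟩)
  have htop : (inferInstance : MeasurableSpace ℕ)
      = MeasurableSpace.generateFrom (Set.range (fun r : ℕ => ({r} : Set ℕ))) := by
    apply le_antisymm
    · intro s _
      have hs : s = ⋃ r ∈ s, {r} := by simp
      rw [hs]
      exact MeasurableSet.biUnion (Set.to_countable s)
        (fun r _ => MeasurableSpace.measurableSet_generateFrom ⟨r, rfl⟩)
    · exact MeasurableSpace.generateFrom_le fun t _ => trivial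
  have hgen : ∀ n, (inferInstance : MeasurableSpace ℕ).comap (f n)
      = MeasurableSpace.generateFrom (π n) := by
    intro n
    rw [htop, MeasurableSpace.comap_generateFrom]
    have himg : (Set.preimage (f n)) '' (Set.range (fun r : ℕ => ({r} : Set ℕ)))
        = {s | ∃ r : ℕ, s = f n ⁻¹' {r}} := by
      ext s
      simp only [Set.mem_image, Set.mem_range, Set.mem_setOf_eq]
      constructor
      · rintro ⟨t, ⟨r, rfl⟩, rfl⟩; exact ⟨r, rfl⟩
      · rintro ⟨r, rfl⟩; exact ⟨{r}, ⟨r, rfl⟩, rfl⟩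
    rw [himg, hπ]
    exact (MeasurableSpace.generateFrom_insert_univ _).symm
  have hind : iIndepSets π μ := by
    rw [iIndepSets_iff]
    intro S sets hsets
    set U : Finset (Fin m) := S.filter (fun n => sets n ≠ Set.univ) with hUdef
    have hUS : U ⊆ S := Finset.filter_subset _ _
    have hex : ∀ n ∈ U, ∃ r : ℕ, sets n = f n ⁻¹' {r} := by
      intro n hn
      obtain ⟨hnS, hne⟩ := Finset.mem_filter.1 hn
      rcases hsets n hnS with h | h
      · exact absurd h hne
      · exact h
    set y : Fin m → ℕ := fun n => if h : ∃ r : ℕ, sets n = f n ⁻¹' {r} then h.choose else 0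
      with hydef
    have hU : ∀ n ∈ U, sets n = f n ⁻¹' {y n} := by
      intro n hn
      have h := hex n hn
      simp only [hydef, dif_pos h]
      exact h.choose_spec
    have hSU : ∀ n ∈ S, n ∉ U → sets n = Set.univ := by
      intro n hn hnu
      by_contra hne
      exact hnu (Finset.mem_filter.2 ⟨hn, hne⟩)
    have hclaim := claim Uᶜ y
    rw [compl_compl] at hclaim
    calc μ (⋂ n ∈ S, sets n)
        = μ (⋂ n, if n ∈ U then f n ⁻¹' {y n} else Set.univ) := by
          congr 1
          ext ω
          simp only [Set.mem_iInter]
          constructor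
          · intro hω n
            split
            · next h => rw [← hU n h]; exact hω n (hUS h)
            · trivial
          · intro hω n hn
            by_cases hnu : n ∈ U
            · rw [hU n hnu]
              have := hω n
              rwa [if_pos hnu] at this
            · rw [hSU n hn hnu]; trivial
      _ = ∏ n ∈ U, μ (f n ⁻¹' {y n}) := hclaim
      _ = ∏ n ∈ U, μ (sets n) := Finset.prod_congr rfl fun n hn => by rw [hU n hn]
      _ = ∏ n ∈ S, μ (sets n) := by
          refine Finset.prod_subset hUS ?_
          intro n hn hnu
          rw [hSU n hn hnu]
          exact measure_univ
  rw [iIndepFun_iff_iIndep]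
  exact iIndepSets.iIndep (m := fun n => MeasurableSpace.comap (f n) inferInstance)
    (fun n => (hf n).comap_le) π hpi hgen hind





/-- Law of a finite sum of independent ℕ-valued random variables. -/
lemma measure_sum_eq {d : ℕ} {f : Fin d → Ω → ℕ}
    (hf : ∀ i, Measurable (f i))
    (hind : iIndepFun f μ) (n : ℕ) :
    μ {ω | (∑ i, f i ω) = n}
      = ∑' v : Fin d → ℕ, (if (∑ i, v i) = n then ∏ i, μ {ω | f i ω = v i} else 0) := by
  classical
  have hg : Measurable (fun ω => fun i => f i ω) := measurable_pi_lambda _ fun i => hf i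
  have hset : {ω | (∑ i, f i ω) = n}
      = (fun ω => fun i => f i ω) ⁻¹' {v : Fin d → ℕ | (∑ i, v i) = n} := rfl
  rw [hset, measure_preimage_eq_tsum _ hg _]
  refine tsum_congr fun v => ?_
  simp only [Set.mem_setOf_eq]
  by_cases hv : (∑ i, v i) = n
  · rw [if_pos hv, if_pos hv]
    have hpre : (fun ω => fun i => f i ω) ⁻¹' {v} = ⋂ i, f i ⁻¹' {v i} := by
      ext ω
      simp [funext_iff]
    rw [hpre, iIndepFun_meas_inter hind v]
    rfl
  · rw [if_neg hv, if_neg hv]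

/-- Joint law of increments over a non-decreasing chain factorizes (handles ties). -/
lemma tie_product [IsProbabilityMeasure μ] {M : ℝ → Ω → ℕ}
    (hii : HasIndepIncrements1 μ M) :
    ∀ (m : ℕ) (ts : Fin (m+1) → ℝ), ts 0 = 0 → (∀ n : Fin m, ts n.castSucc ≤ ts n.succ) →
    ∀ z : Fin m → ℕ,
      μ (⋂ n, (fun ω => M (ts n.succ) ω - M (ts n.castSucc) ω) ⁻¹' {z n})
        = ∏ n, μ ((fun ω => M (ts n.succ) ω - M (ts n.castSucc) ω) ⁻¹' {z n}) := by
  intro m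
  induction m with
  | zero =>
    intro ts h0 hmono z
    simp
  | succ m ih =>
    intro ts h0 hmono z
    by_cases hstrict : ∀ n : Fin (m+1), ts n.castSucc < ts n.succ
    · exact iIndepFun_meas_inter (hii (m+1) ts h0 hstrict) z
    · push_neg at hstrict
      obtain ⟨n0, hn0⟩ := hstrict
      have htie : ts n0.castSucc = ts n0.succ := le_antisymm (hmono n0) hn0
      have hX0 : ∀ ω, M (ts n0.succ) ω - M (ts n0.castSucc) ω = 0 := fun ω => by
        rw [← htie]; exact Nat.sub_self _
      by_cases hz : z n0 = 0
      · -- the n0 constraint is trivially satisfied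
        set ts' : Fin (m+1) → ℝ := ts ∘ (Fin.succAbove n0.succ) with hts'
        have hkey1 : ∀ r : Fin m, ts' r.succ = ts (n0.succAbove r).succ := by
          intro r
          rw [hts']
          simp only [Function.comp_apply, Fin.succ_succAbove_succ]
        have hkey2 : ∀ r : Fin m, ts' r.castSucc = ts (n0.succAbove r).castSucc := by
          intro r
          rw [hts']
          simp only [Function.comp_apply]
          rcases lt_trichotomy (r.1 : ℕ) (n0.1 : ℕ) with hlt | heq | hgt
          · rw [Fin.succAbove_of_castSucc_lt _ _
                (by rw [Fin.lt_def]; simp only [Fin.coe_castSucc, Fin.val_succ]; omega),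
              Fin.succAbove_of_castSucc_lt _ _
                (by rw [Fin.lt_def]; simp only [Fin.coe_castSucc]; omega)]
          · rw [Fin.succAbove_of_castSucc_lt _ _
                (by rw [Fin.lt_def]; simp only [Fin.coe_castSucc, Fin.val_succ]; omega),
              Fin.succAbove_of_le_castSucc _ _
                (by rw [Fin.le_def]; simp only [Fin.coe_castSucc]; omega)]
            have e1 : (r.castSucc.castSucc : Fin (m+2)) = n0.castSucc := by
              apply Fin.ext
              simp only [Fin.coe_castSucc]
              omega
            have e2 : ((r.succ).castSucc : Fin (m+2)) = n0.succ := by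
              apply Fin.ext
              simp only [Fin.coe_castSucc, Fin.val_succ]
              omega
            rw [e1, e2, htie]
          · rw [Fin.succAbove_of_le_castSucc _ _
                (by rw [Fin.le_def]; simp only [Fin.coe_castSucc, Fin.val_succ]; omega),
              Fin.succAbove_of_le_castSucc _ _
                (by rw [Fin.le_def]; simp only [Fin.coe_castSucc]; omega)]
            apply congrArg
            apply Fin.ext
            simp only [Fin.val_succ, Fin.coe_castSucc]
        have h0' : ts' 0 = 0 := by
          rw [hts']
          simp only [Function.comp_apply]
          rw [Fin.succAbove_of_castSucc_lt _ _ (by simp [Fin.lt_def]), Fin.castSucc_zero, h0]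
        have hmono' : ∀ r : Fin m, ts' r.castSucc ≤ ts' r.succ := fun r => by
          rw [hkey1, hkey2]; exact hmono _
        have ihz := ih ts' h0' hmono' (fun r => z (n0.succAbove r))
        have hXr : ∀ r : Fin m,
            (fun ω => M (ts' r.succ) ω - M (ts' r.castSucc) ω)
              = (fun ω => M (ts (n0.succAbove r).succ) ω - M (ts (n0.succAbove r).castSucc) ω) :=
          fun r => by rw [hkey1, hkey2]
        have hiI : (⋂ n, (fun ω => M (ts n.succ) ω - M (ts n.castSucc) ω) ⁻¹' {z n})
            = ⋂ r : Fin m, (fun ω => M (ts (n0.succAbove r).succ) ω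
                - M (ts (n0.succAbove r).castSucc) ω) ⁻¹' {z (n0.succAbove r)} := by
          ext ω
          simp only [Set.mem_iInter, Set.mem_preimage, Set.mem_singleton_iff]
          constructor
          · intro hω r
            exact hω _
          · intro hω n
            by_cases hn : n = n0
            · subst hn
              rw [hX0 ω, hz]
            · obtain ⟨r, hr⟩ := Fin.exists_succAbove_eq hn
              rw [← hr]
              exact hω r
        have huniv : (fun ω => M (ts n0.succ) ω - M (ts n0.castSucc) ω) ⁻¹' {z n0}
            = Set.univ := by
          ext ω
          simp [hX0 ω, hz.symm, eq_comm]
        rw [hiI]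
        have lhs_eq : μ (⋂ r : Fin m, (fun ω => M (ts (n0.succAbove r).succ) ω
                - M (ts (n0.succAbove r).castSucc) ω) ⁻¹' {z (n0.succAbove r)})
            = ∏ r : Fin m, μ ((fun ω => M (ts (n0.succAbove r).succ) ω
                - M (ts (n0.succAbove r).castSucc) ω) ⁻¹' {z (n0.succAbove r)}) := by
          have := ihz
          simp only [hXr] at this
          exact this
        rw [lhs_eq, Fin.prod_univ_succAbove
          (fun n => μ ((fun ω => M (ts n.succ) ω - M (ts n.castSucc) ω) ⁻¹' {z n})) n0,
          huniv, measure_univ, one_mul]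
      · -- z n0 ≠ 0 : both sides vanish
        have hempty : (fun ω => M (ts n0.succ) ω - M (ts n0.castSucc) ω) ⁻¹' {z n0} = ∅ := by
          ext ω
          simp [hX0 ω]
          exact fun h => hz h.symm
        rw [measure_mono_null (Set.iInter_subset _ n0) (by rw [hempty]; exact measure_empty)]
        rw [Finset.prod_eq_zero (Finset.mem_univ n0) (by rw [hempty]; exact measure_empty)]


end GCPAux

namespace GCPAux
/-- Support bound: outside the box, the weight constraint fails. -/
lemma wsum_out {k n : ℕ} (x : Fin k → ℕ)
    (hx : x ∉ Fintype.piFinset (fun _ : Fin k => Finset.range (n+1))) :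
    (∑ j, (j.1 + 1) * x j) ≠ n := by
  rw [Fintype.mem_piFinset] at hx
  push_neg at hx
  obtain ⟨j, hj⟩ := hx
  rw [Finset.mem_range] at hj
  push_neg at hj
  intro hcon
  have h1 : (j.1 + 1) * x j ≤ ∑ j', (j'.1 + 1) * x j' :=
    Finset.single_le_sum (f := fun j' => (j'.1 + 1) * x j') (fun _ _ => Nat.zero_le _)
      (Finset.mem_univ j)
  have h2 : x j ≤ (j.1 + 1) * x j := Nat.le_mul_of_pos_left _ (Nat.succ_pos _)
  omega

/-- Convert the real `gcp1Pmf` to an `ℝ≥0∞` constrained sum of Poisson weights. -/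
lemma gcp1Pmf_ofReal (k : ℕ) (lamv : Fin k → ℝ) (h : ∀ j, 0 ≤ lamv j * s) (n : ℕ) :
    ENNReal.ofReal (gcp1Pmf k lamv n s)
      = ∑' x : Fin k → ℕ,
          (if (∑ j, (j.1 + 1) * x j) = n then ∏ j, pois (lamv j * s) (x j) else 0) := by
  classical
  set T := Fintype.piFinset (fun _ : Fin k => Finset.range (n+1)) with hT
  rw [gcp1Pmf, tsum_eq_sum (s := T) (fun x hx => if_neg (wsum_out x hx)),
    tsum_eq_sum (s := T) (fun x hx => if_neg (wsum_out x hx)),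
    ENNReal.ofReal_sum_of_nonneg (fun x _ => by
      split
      · exact Finset.prod_nonneg fun j _ => pois_real_nonneg _ (h j) _
      · exact le_rfl)]
  refine Finset.sum_congr rfl fun x _ => ?_
  split
  · exact ENNReal.ofReal_prod_of_nonneg fun j _ => pois_real_nonneg _ (h j) _
  · exact ENNReal.ofReal_zero

lemma gcpPmf_ofReal (d k : ℕ) (lam : Fin k → Fin d → ℝ) (t : Fin d → ℝ)
    (h : ∀ j, 0 ≤ ∑ i, lam j i * t i) (n : ℕ) :
    ENNReal.ofReal (gcpPmf d k lam n t)
      = ∑' x : Fin k → ℕ,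
          (if (∑ j, (j.1 + 1) * x j) = n then ∏ j, pois (∑ i, lam j i * t i) (x j) else 0) := by
  classical
  set T := Fintype.piFinset (fun _ : Fin k => Finset.range (n+1)) with hT
  rw [gcpPmf, tsum_eq_sum (s := T) (fun x hx => if_neg (wsum_out x hx)),
    tsum_eq_sum (s := T) (fun x hx => if_neg (wsum_out x hx)),
    ENNReal.ofReal_sum_of_nonneg (fun x _ => by
      split
      · exact Finset.prod_nonneg fun j _ => pois_real_nonneg _ (h j) _
      · exact le_rfl)]
  refine Finset.sum_congr rfl fun x _ => ?_
  split
  · exact ENNReal.ofReal_prod_of_nonneg fun j _ => pois_real_nonneg _ (h j) _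
  · exact ENNReal.ofReal_zero


lemma main_identity (d k : ℕ) (lam : Fin k → Fin d → ℝ) (t : Fin d → ℝ)
    (h : ∀ j i, 0 ≤ lam j i * t i) (n : ℕ) :
    (∑' v : Fin d → ℕ, if (∑ i, v i) = n then
        ∏ i, (∑' x : Fin k → ℕ,
          if (∑ j, (j.1 + 1) * x j) = v i then ∏ j, pois (lam j i * t i) (x j) else 0)
      else 0)
    = ∑' y : Fin k → ℕ,
        (if (∑ j, (j.1 + 1) * y j) = n then ∏ j, pois (∑ i, lam j i * t i) (y j) else 0) := by
  classical
  -- LHS to matrix form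
  have hL : ∀ v : Fin d → ℕ,
      (if (∑ i, v i) = n then
        ∏ i, (∑' x : Fin k → ℕ,
          if (∑ j, (j.1 + 1) * x j) = v i then ∏ j, pois (lam j i * t i) (x j) else 0)
      else 0)
      = if (∑ i, v i) = n then
          (∑' X : Fin d → (Fin k → ℕ),
            if (fun i => ∑ j, (j.1 + 1) * X i j) = v then
              ∏ i, ∏ j, pois (lam j i * t i) (X i j) else 0)
        else 0 := by
    intro v
    split
    · rw [prod_tsum d (fun (i : Fin d) (x : Fin k → ℕ) =>
        if (∑ j, (j.1 + 1) * x j) = v i then ∏ j, pois (lam j i * t i) (x j) else 0)]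
      refine tsum_congr fun X => ?_
      rw [prod_ite_zero (fun i => (∑ j, (j.1 + 1) * X i j) = v i)]
      congr 1
      simp [funext_iff]
    · rfl
  rw [tsum_congr hL,
    ← tsum_regroup (fun X : Fin d → (Fin k → ℕ) => fun i => ∑ j, (j.1 + 1) * X i j)
      (fun v => (∑ i, v i) = n)
      (fun X => ∏ i, ∏ j, pois (lam j i * t i) (X i j))]
  -- RHS to matrix form
  have hR : ∀ y : Fin k → ℕ,
      (if (∑ j, (j.1 + 1) * y j) = n then ∏ j, pois (∑ i, lam j i * t i) (y j) else 0)
      = if (∑ j, (j.1 + 1) * y j) = n then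
          (∑' C : Fin k → (Fin d → ℕ),
            if (fun j => ∑ i, C j i) = y then
              ∏ j, ∏ i, pois (lam j i * t i) (C j i) else 0)
        else 0 := by
    intro y
    split
    · have hpp : ∀ j : Fin k, pois (∑ i, lam j i * t i) (y j)
          = ∑' c : Fin d → ℕ,
              (if (∑ i, c i) = y j then ∏ i, pois (lam j i * t i) (c i) else 0) :=
        fun j => (pois_pi d (fun i => lam j i * t i) (fun i => h j i) (y j)).symm
      rw [Finset.prod_congr rfl (fun j _ => hpp j),
        prod_tsum k (fun (j : Fin k) (c : Fin d → ℕ) =>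
          if (∑ i, c i) = y j then ∏ i, pois (lam j i * t i) (c i) else 0)]
      refine tsum_congr fun C => ?_
      rw [prod_ite_zero (fun j => (∑ i, C j i) = y j)]
      congr 1
      simp [funext_iff]
    · rfl
  rw [tsum_congr hR,
    ← tsum_regroup (fun C : Fin k → (Fin d → ℕ) => fun j => ∑ i, C j i)
      (fun y => (∑ j, (j.1 + 1) * y j) = n)
      (fun C => ∏ j, ∏ i, pois (lam j i * t i) (C j i))]
  -- transpose
  rw [← Equiv.tsum_eq (Equiv.piComm (fun (_ : Fin d) (_ : Fin k) => ℕ))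
    (fun C : Fin k → Fin d → ℕ =>
      if (∑ j, (j.1 + 1) * ∑ i, C j i) = n then
        ∏ j, ∏ i, pois (lam j i * t i) (C j i) else 0)]
  refine tsum_congr fun X => ?_
  have hcond : (∑ j : Fin k, (j.1 + 1) * ∑ i : Fin d, X i j)
      = ∑ i : Fin d, ∑ j : Fin k, (j.1 + 1) * X i j := by
    rw [Finset.sum_comm]
    exact Finset.sum_congr rfl fun j _ => Finset.mul_sum _ _ _
  have happ : ∀ (j : Fin k) (i : Fin d),
      ((Equiv.piComm (fun (_ : Fin d) (_ : Fin k) => ℕ)) X) j i = X i j := fun _ _ => rfl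
  simp only [happ, hcond]
  rw [Finset.prod_comm]

end GCPAux

namespace GCPAux

open scoped BigOperators ENNReal
open MeasureTheory ProbabilityTheory

lemma nat_sum_sub {ι : Type*} [Fintype ι] (a b : ι → ℕ) (h : ∀ i, b i ≤ a i) :
    (∑ i, a i) - (∑ i, b i) = ∑ i, (a i - b i) := by
  have h2 : (∑ i, (a i - b i)) + ∑ i, b i = ∑ i, a i := by
    rw [← Finset.sum_add_distrib]
    exact Finset.sum_congr rfl fun i _ => by have := h i; omega
  have h3 : (∑ i, b i) ≤ ∑ i, a i := Finset.sum_le_sum fun i _ => h i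
  omega

lemma chain_zero_le {α : Type*} [Preorder α] {m : ℕ} (ts : Fin (m+1) → α)
    (h : ∀ n : Fin m, ts n.castSucc ≤ ts n.succ) : ∀ n, ts 0 ≤ ts n := by
  intro n
  induction n using Fin.induction with
  | zero => exact le_rfl
  | succ r ih => exact le_trans ih (h r)

lemma gcpPmf_single (d k : ℕ) (lam : Fin k → Fin d → ℝ) (i : Fin d) (s : ℝ) (n : ℕ) :
    gcpPmf d k lam n ((Pi.single i s : Fin d → ℝ)) = gcp1Pmf k (fun j => lam j i) n s := by
  unfold gcpPmf gcp1Pmf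
  refine tsum_congr fun x => ?_
  have harg : ∀ j : Fin k, (∑ i', lam j i' * (Pi.single i s : Fin d → ℝ) i') = lam j i * s := by
    intro j
    rw [Finset.sum_eq_single i]
    · rw [Pi.single_eq_same]
    · intro b _ hb
      rw [Pi.single_eq_of_ne hb, mul_zero]
    · intro h
      exact absurd (Finset.mem_univ i) h
  split
  · refine Finset.prod_congr rfl fun j _ => ?_
    rw [harg j]
  · rfl

end GCPAux

open GCPAux

/-- Let `M_1,…,M_d` be independent one-parameter counting processes. The multiparameter
process `𝓜(t) = M_1(t_1) + ⋯ + M_d(t_d)` is a multiparameter GCP with transition rates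
`Λ_1,…,Λ_k` if and only if for each `i = 1,…,d` the process `M_i` is a GCP with positive
rates `λ_{1i},…,λ_{ki}`. -/
theorem sum_isMultiGCP_iff_forall_isGCP
    {Ω : Type*} [MeasurableSpace Ω] (μ : Measure Ω) [IsProbabilityMeasure μ]
    (d k : ℕ) (hd : 1 ≤ d) (hk : 1 ≤ k)
    (lam : Fin k → Fin d → ℝ) (hlam : ∀ j i, 0 < lam j i)
    (M : Fin d → ℝ → Ω → ℕ)
    (hmeas : ∀ i s, Measurable (M i s))
    (hcount : ∀ i, IsCounting1 (M i))
    (hindep : iIndepFun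
      (fun (i : Fin d) (ω : Ω) (s : ℝ) => M i s ω) μ) :
    IsMultiGCP μ d k lam (fun t ω => ∑ i, M i (t i) ω)
    ↔ ∀ i : Fin d, IsGCP μ k (fun j => lam j i) (M i) := by
  classical
  have hsumSingle : ∀ (i : Fin d) (s : ℝ) (ω : Ω),
      (∑ i', M i' ((Pi.single i s : Fin d → ℝ) i') ω) = M i s ω := by
    intro i s ω
    rw [Finset.sum_eq_single i]
    · rw [Pi.single_eq_same]
    · intro b _ hb
      rw [Pi.single_eq_of_ne hb, (hcount b).1 ω]
    · intro hmem
      exact absurd (Finset.mem_univ i) hmem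
  constructor
  · rintro ⟨hcnt, hii, hst, hdist⟩ i
    refine ⟨hcount i, ?_, ?_, ?_⟩
    · -- independent increments of M i
      intro m ts h0 hstrict
      have h0' : (fun n : Fin (m+1) => (Pi.single i (ts n) : Fin d → ℝ)) 0 = 0 := by
        simp only [h0]
        exact Pi.single_zero i
      have hstrict' : ∀ n : Fin m, (fun n : Fin (m+1) => (Pi.single i (ts n) : Fin d → ℝ))
          n.castSucc < (fun n : Fin (m+1) => (Pi.single i (ts n) : Fin d → ℝ)) n.succ := by
        intro n
        refine lt_of_le_of_ne ?_ ?_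
        · intro i'
          by_cases hi' : i' = i
          · subst hi'
            simp only [Pi.single_eq_same]
            exact (hstrict n).le
          · simp [Pi.single_eq_of_ne hi']
        · intro hEq
          have := congrFun hEq i
          simp only [Pi.single_eq_same] at this
          exact absurd this (ne_of_lt (hstrict n))
      have hkey := hii m (fun n => Pi.single i (ts n)) h0' hstrict'
      have hfun : (fun (n : Fin m) (ω : Ω) =>
          (fun (t : Fin d → ℝ) (ω : Ω) => ∑ i', M i' (t i') ω) (Pi.single i (ts n.succ)) ω
            - (fun (t : Fin d → ℝ) (ω : Ω) => ∑ i', M i' (t i') ω) (Pi.single i (ts n.castSucc)) ω)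
          = fun (n : Fin m) (ω : Ω) => M i (ts n.succ) ω - M i (ts n.castSucc) ω := by
        funext n ω
        simp only [hsumSingle]
      rw [← hfun]
      exact hkey
    · -- stationary increments of M i
      intro s s' hs hss'
      have h1 : (0 : Fin d → ℝ) ≤ Pi.single i s := by
        intro i'
        by_cases hi' : i' = i
        · subst hi'; simpa [Pi.single_eq_same] using hs
        · simp [Pi.single_eq_of_ne hi']
      have h2 : (Pi.single i s : Fin d → ℝ) ≤ Pi.single i s' := by
        intro i'
        by_cases hi' : i' = i
        · subst hi'; simpa [Pi.single_eq_same] using hss'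
        · simp [Pi.single_eq_of_ne hi']
      have hstep := hst (Pi.single i s) (Pi.single i s') h1 h2
      have e1 : (fun ω => (∑ i', M i' ((Pi.single i s' : Fin d → ℝ) i') ω) - (∑ i', M i' ((Pi.single i s : Fin d → ℝ) i') ω))
          = fun ω => M i s' ω - M i s ω := by
        funext ω
        simp only [hsumSingle]
      have esub : (Pi.single i s' - Pi.single i s : Fin d → ℝ) = Pi.single i (s' - s) := by
        rw [← Pi.single_sub]
      have e2 : (fun ω => ∑ i', M i' ((Pi.single i s' - Pi.single i s : Fin d → ℝ) i') ω)
          = M i (s' - s) := by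
        funext ω
        rw [esub]
        exact hsumSingle i (s' - s) ω
      calc μ.map (fun ω => M i s' ω - M i s ω)
          = μ.map (fun ω => (∑ i', M i' ((Pi.single i s' : Fin d → ℝ) i') ω)
              - (∑ i', M i' ((Pi.single i s : Fin d → ℝ) i') ω)) := by rw [e1]
        _ = μ.map (fun ω => ∑ i', M i' ((Pi.single i s' - Pi.single i s : Fin d → ℝ) i') ω) :=
            hstep
        _ = μ.map (M i (s' - s)) := by rw [e2]
    · -- one-dimensional distributions of M i
      intro s hs n
      have h1 : (0 : Fin d → ℝ) ≤ Pi.single i s := by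
        intro i'
        by_cases hi' : i' = i
        · subst hi'; simpa [Pi.single_eq_same] using hs
        · simp [Pi.single_eq_of_ne hi']
      have hset : {ω | M i s ω = n} = {ω | (∑ i', M i' ((Pi.single i s : Fin d → ℝ) i') ω) = n} :=
        Set.ext fun ω => by rw [Set.mem_setOf_eq, Set.mem_setOf_eq, hsumSingle]
      rw [hset, hdist (Pi.single i s) h1 n, gcpPmf_single d k lam i s n]
  · -- converse direction
    intro hGCP
    have hle0 : ∀ i : Fin d, ∀ s s' : ℝ, 0 ≤ s → s ≤ s' → ∀ ω, M i s ω ≤ M i s' ω :=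
      fun i => (hcount i).2
    refine ⟨⟨?_, ?_⟩, ?_, ?_, ?_⟩
    · intro ω
      simp only [Pi.zero_apply]
      exact Finset.sum_eq_zero fun i _ => (hcount i).1 ω
    · intro s t hs hst ω
      exact Finset.sum_le_sum fun i _ => hle0 i (s i) (t i) (hs i) (hst i) ω
    · -- independent increments
      intro m ts h0 hlt
      have hle : ∀ n : Fin m, ts n.castSucc ≤ ts n.succ := fun n => (hlt n).le
      have h0le : ∀ n : Fin (m+1), (0 : Fin d → ℝ) ≤ ts n := by
        intro n
        have := chain_zero_le ts hle n
        rwa [h0] at this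
      -- increments of the individual processes
      set X : Fin d → Fin m → Ω → ℕ :=
        fun i n ω => M i (ts n.succ i) ω - M i (ts n.castSucc i) ω with hX
      have hXmeas : ∀ i n, Measurable (X i n) :=
        fun i n => (hmeas i (ts n.succ i)).sub (hmeas i (ts n.castSucc i))
      have hpoint : ∀ (n : Fin m) (ω : Ω),
          (∑ i, M i (ts n.succ i) ω) - (∑ i, M i (ts n.castSucc i) ω) = ∑ i, X i n ω := by
        intro n ω
        exact nat_sum_sub _ _ (fun i =>
          hle0 i (ts n.castSucc i) (ts n.succ i) (h0le n.castSucc i) (hle n i) ω)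
      have hSmeas : ∀ n : Fin m, Measurable (fun ω =>
          (∑ i, M i (ts n.succ i) ω) - (∑ i, M i (ts n.castSucc i) ω)) := by
        intro n
        exact (Finset.measurable_sum _ fun i _ => hmeas i (ts n.succ i)).sub
          (Finset.measurable_sum _ fun i _ => hmeas i (ts n.castSucc i))
      refine iIndepFun_of_singleton_rule hSmeas ?_
      intro y
      -- the vector of increments of process i
      set Vec : Fin d → Ω → (Fin m → ℕ) := fun i ω n => X i n ω with hVec
      have hVecMeas : ∀ i, Measurable (Vec i) :=
        fun i => measurable_pi_lambda _ fun n => hXmeas i n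
      have hVecIndep : iIndepFun Vec μ := by
        have := hindep.comp
          (fun i (h : ℝ → ℕ) => fun n : Fin m => h (ts n.succ i) - h (ts n.castSucc i))
          (fun i => measurable_pi_lambda _ fun n =>
            (measurable_pi_apply _).sub (measurable_pi_apply _))
        exact this
      have hTie : ∀ (i : Fin d) (z : Fin m → ℕ),
          μ (⋂ n, (X i n) ⁻¹' {z n}) = ∏ n, μ ((X i n) ⁻¹' {z n}) := by
        intro i z
        have h0i : (fun n : Fin (m+1) => ts n i) 0 = 0 := by
          show ts 0 i = 0
          rw [h0]
          rfl
        exact tie_product (hGCP i).2.1 m (fun n => ts n i) h0i (fun n => hle n i) z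
      -- joint law of the matrix of increments
      set G : Ω → (Fin d → Fin m → ℕ) := fun ω i n => X i n ω with hG
      have hGmeas : Measurable G :=
        measurable_pi_lambda _ fun i => measurable_pi_lambda _ fun n => hXmeas i n
      set A : Set (Fin d → Fin m → ℕ) := {u | ∀ n, (∑ i, u i n) = y n} with hA
      have hiI : (⋂ n, (fun ω => (∑ i, M i (ts n.succ i) ω)
            - (∑ i, M i (ts n.castSucc i) ω)) ⁻¹' {y n}) = G ⁻¹' A := by
        ext ω
        simp only [Set.mem_iInter, Set.mem_preimage, Set.mem_singleton_iff, hA,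
          Set.mem_setOf_eq]
        exact forall_congr' fun n => by rw [hpoint n ω]
      have hGsing : ∀ u : Fin d → Fin m → ℕ,
          μ (G ⁻¹' {u}) = ∏ i, ∏ n, μ ((X i n) ⁻¹' {u i n}) := by
        intro u
        have h1 : G ⁻¹' {u} = ⋂ i, (Vec i) ⁻¹' {u i} := by
          ext ω
          simp only [Set.mem_preimage, Set.mem_singleton_iff, Set.mem_iInter, funext_iff]
          exact Iff.rfl
        rw [h1, iIndepFun_meas_inter hVecIndep u]
        refine Finset.prod_congr rfl fun i _ => ?_
        have h2 : (Vec i) ⁻¹' {u i} = ⋂ n, (X i n) ⁻¹' {u i n} := by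
          ext ω
          simp only [Set.mem_preimage, Set.mem_singleton_iff, Set.mem_iInter, funext_iff]
          exact Iff.rfl
        rw [h2, hTie i (u i)]
      -- left side as a constrained sum
      rw [hiI, measure_preimage_eq_tsum G hGmeas A, tsum_congr (fun u => by rw [hGsing u])]
      -- right side: law of each sum
      have hRHS : ∀ n : Fin m,
          μ ((fun ω => (∑ i, M i (ts n.succ i) ω) - (∑ i, M i (ts n.castSucc i) ω)) ⁻¹' {y n})
            = ∑' w : Fin d → ℕ,
                (if (∑ i, w i) = y n then ∏ i, μ {ω | X i n ω = w i} else 0) := by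
        intro n
        have hsetn : ((fun ω => (∑ i, M i (ts n.succ i) ω)
              - (∑ i, M i (ts n.castSucc i) ω)) ⁻¹' {y n}) = {ω | (∑ i, X i n ω) = y n} := by
          ext ω
          simp only [Set.mem_preimage, Set.mem_singleton_iff, Set.mem_setOf_eq, hpoint n ω]
        have hindn : iIndepFun
            (fun i ω => X i n ω) μ := by
          have := hindep.comp
            (fun i (h : ℝ → ℕ) => h (ts n.succ i) - h (ts n.castSucc i))
            (fun i => (measurable_pi_apply _).sub (measurable_pi_apply _))
          exact this
        rw [hsetn, measure_sum_eq (fun i => hXmeas i n) hindn (y n)]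
      rw [Finset.prod_congr rfl (fun n _ => hRHS n),
        prod_tsum m (fun (n : Fin m) (w : Fin d → ℕ) =>
          if (∑ i, w i) = y n then ∏ i, μ {ω | X i n ω = w i} else 0)]
      -- both sides are sums over matrices; transpose
      rw [← Equiv.tsum_eq (Equiv.piComm (fun (_ : Fin d) (_ : Fin m) => ℕ))
        (fun W : Fin m → Fin d → ℕ =>
          ∏ n, if (∑ i, W n i) = y n then ∏ i, μ {ω | X i n ω = W n i} else 0)]
      refine tsum_congr fun u => ?_
      have happ : ∀ (n : Fin m) (i : Fin d),
          ((Equiv.piComm (fun (_ : Fin d) (_ : Fin m) => ℕ)) u) n i = u i n := fun _ _ => rfl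
      simp only [happ]
      rw [prod_ite_zero (fun n => (∑ i, u i n) = y n)
        (fun n => ∏ i, μ {ω | X i n ω = u i n})]
      simp only [hA, Set.mem_setOf_eq]
      by_cases hu : ∀ n, (∑ i, u i n) = y n
      · rw [if_pos hu, if_pos hu, Finset.prod_comm]
        rfl
      · rw [if_neg hu, if_neg hu]
    · -- stationary increments
      intro s t hs hst
      have hpt : (fun ω => (∑ i, M i (t i) ω) - (∑ i, M i (s i) ω))
          = fun ω => ∑ i, (M i (t i) ω - M i (s i) ω) := by
        funext ω
        exact nat_sum_sub _ _ (fun i => hle0 i (s i) (t i) (hs i) (hst i) ω)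
      have hXmeas : ∀ i : Fin d, Measurable (fun ω => M i (t i) ω - M i (s i) ω) :=
        fun i => (hmeas i (t i)).sub (hmeas i (s i))
      have hZmeas : ∀ i : Fin d, Measurable (M i ((t - s) i)) := fun i => hmeas i _
      have hXind : iIndepFun
          (fun i ω => M i (t i) ω - M i (s i) ω) μ := by
        have := hindep.comp (fun i (h : ℝ → ℕ) => h (t i) - h (s i))
          (fun i => (measurable_pi_apply _).sub (measurable_pi_apply _))
        exact this
      have hZind : iIndepFun
          (fun i ω => M i ((t - s) i) ω) μ := by
        have := hindep.comp (fun i (h : ℝ → ℕ) => h ((t - s) i))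
          (fun i => measurable_pi_apply _)
        exact this
      have hmarg : ∀ (i : Fin d) (v : ℕ),
          μ {ω | M i (t i) ω - M i (s i) ω = v} = μ {ω | M i ((t - s) i) ω = v} := by
        intro i v
        have := (hGCP i).2.2.1 (s i) (t i) (hs i) (hst i)
        have h1 := congrArg (fun ν : Measure ℕ => ν {v}) this
        rw [Measure.map_apply (hXmeas i) (measurableSet_singleton v),
          Measure.map_apply (hmeas i _) (measurableSet_singleton v)] at h1
        exact h1
      have hmeasSum : Measurable (fun ω => ∑ i, M i (t i) ω) :=
        Finset.measurable_sum _ fun i _ => hmeas i (t i)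
      have hmeasSum' : Measurable (fun ω => ∑ i, M i (s i) ω) :=
        Finset.measurable_sum _ fun i _ => hmeas i (s i)
      refine Measure.ext_of_singleton fun v => ?_
      rw [Measure.map_apply (f := fun ω => (∑ i, M i (t i) ω) - (∑ i, M i (s i) ω))
          (hmeasSum.sub hmeasSum') (measurableSet_singleton v),
        Measure.map_apply (Finset.measurable_sum _ fun i _ => hmeas i ((t - s) i))
          (measurableSet_singleton v)]
      have e1 : ((fun ω => (∑ i, M i (t i) ω) - (∑ i, M i (s i) ω)) ⁻¹' {v})
          = {ω | (∑ i, (fun i ω => M i (t i) ω - M i (s i) ω) i ω) = v} := by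
        ext ω
        simp only [Set.mem_preimage, Set.mem_singleton_iff, Set.mem_setOf_eq]
        rw [congrFun hpt ω]
      have e2 : ((fun ω => ∑ i, M i ((t - s) i) ω) ⁻¹' {v})
          = {ω | (∑ i, (fun i ω => M i ((t - s) i) ω) i ω) = v} := rfl
      rw [e1, e2, measure_sum_eq hXmeas hXind v, measure_sum_eq hZmeas hZind v]
      refine tsum_congr fun w => ?_
      by_cases hw : (∑ i, w i) = v
      · rw [if_pos hw, if_pos hw]
        exact Finset.prod_congr rfl fun i _ => hmarg i (w i)
      · rw [if_neg hw, if_neg hw]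
    · -- one-dimensional distributions
      intro t ht n
      have hXmeas : ∀ i : Fin d, Measurable (fun ω => M i (t i) ω) :=
        fun i => hmeas i (t i)
      have hXind : iIndepFun
          (fun i ω => M i (t i) ω) μ := by
        have := hindep.comp (fun i (h : ℝ → ℕ) => h (t i))
          (fun i => measurable_pi_apply _)
        exact this
      have hnn : ∀ (j : Fin k) (i : Fin d), 0 ≤ lam j i * t i :=
        fun j i => mul_nonneg (hlam j i).le (ht i)
      have hL : {ω | (∑ i, M i (t i) ω) = n}
          = {ω | (∑ i, (fun i ω => M i (t i) ω) i ω) = n} := rfl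
      rw [hL, measure_sum_eq hXmeas hXind n]
      have hQ : ∀ (i : Fin d) (v : ℕ), μ {ω | M i (t i) ω = v}
          = ∑' x : Fin k → ℕ,
              (if (∑ j, (j.1 + 1) * x j) = v then ∏ j, pois (lam j i * t i) (x j) else 0) := by
        intro i v
        rw [(hGCP i).2.2.2 (t i) (ht i) v, gcp1Pmf_ofReal k (fun j => lam j i)
          (fun j => hnn j i) v]
      have hstep : (∑' v : Fin d → ℕ,
            if (∑ i, v i) = n then ∏ i, μ {ω | M i (t i) ω = v i} else 0)
          = ∑' v : Fin d → ℕ, (if (∑ i, v i) = n then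
              ∏ i, (∑' x : Fin k → ℕ,
                if (∑ j, (j.1 + 1) * x j) = v i then ∏ j, pois (lam j i * t i) (x j) else 0)
            else 0) := by
        refine tsum_congr fun v => ?_
        by_cases hv : (∑ i, v i) = n
        · rw [if_pos hv, if_pos hv]
          exact Finset.prod_congr rfl fun i _ => hQ i (v i)
        · rw [if_neg hv, if_neg hv]
      rw [hstep, main_identity d k lam t hnn n,
        ← gcpPmf_ofReal d k lam t (fun j => Finset.sum_nonneg fun i _ => hnn j i) n]
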